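/- There exists a connected finite graph G on 17 vertices and a set P of 7 longest paths of G such that the paths of P have no common vertex; consequently f(G,P) ≥ 1, so the path-distance-ratio satisfies d₇ ≥ 1/17 for the class of connected graphs. -/

import Mathlib

open SimpleGraph

/-- `w` is a longest path of `G`: it is a path and no path of `G` is longer. -/
def IsLongestPath {V : Type*} (G : SimpleGraph V) {u v : V} (w : G.Walk u v) : Prop :=
  w.IsPath ∧ ∀ (a b : V) (q : G.Walk a b), q.IsPath → q.length ≤ w.length

/-- The distance `d_G(x, V(w))` from a vertex `x` to the vertex set of a walk `w`. -/
noncomputable def distToWalk {V : Type*} (G : SimpleGraph V) (x : V) {u v : V}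
    (w : G.Walk u v) : ℕ :=
  sInf {d : ℕ | ∃ y ∈ w.support, G.dist x y = d}

/-- The path-distance-function `f(G, 𝒫)` of a family `𝒫` of paths of `G`. -/
noncomputable def pdf {V : Type*} (G : SimpleGraph V) {k : ℕ}
    (P : Fin k → Σ u : V, Σ v : V, G.Walk u v) : ℕ :=
  sInf {s : ℕ | ∃ x : V, s = ∑ i, distToWalk G x (P i).2.2}

def nbrsL : List (List (Fin 17)) := [[7, 1], [13, 0, 12], [12, 15, 14], [4, 14, 16], [3, 8], [10, 9], [13, 16, 15], [0], [4], [5], [5, 15], [14, 13], [2, 1], [1, 11, 6], [11, 2, 3], [2, 10, 6], [6, 3]]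

def nbrs (v : Fin 17) : List (Fin 17) := nbrsL.getD v.val []

def G17 : SimpleGraph (Fin 17) where
  Adj a b := b ∈ nbrs a
  symm := ⟨fun a b h => (by decide : ∀ a b : Fin 17, b ∈ nbrs a → a ∈ nbrs b) a b h⟩
  loopless := ⟨fun a h => (by decide : ∀ a : Fin 17, a ∉ nbrs a) a h⟩

instance : DecidableRel G17.Adj := fun a b => inferInstanceAs (Decidable (b ∈ nbrs a))

/-- One DFS extension step: extend each partial path at its head. -/
def step (ls : List (List (Fin 17))) : List (List (Fin 17)) :=
  ls.flatMap fun l =>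
    match l with
    | [] => []
    | a :: _ => ((nbrs a).filter (fun b => decide (b ∉ l))).map (fun b => b :: l)

/-- All simple paths (as reversed vertex lists) with `n+1` vertices. -/
def layers : ℕ → List (List (Fin 17))
  | 0 => (List.finRange 17).map (fun v => [v])
  | n + 1 => step (layers n)

lemma mem_layers : ∀ (t : List (Fin 17)) (a : Fin 17),
    (a :: t).Chain' G17.Adj → (a :: t).Nodup → (a :: t) ∈ layers t.length := by
  intro t
  induction t with
  | nil =>
    intro a _ _
    exact List.mem_map.mpr ⟨a, List.mem_finRange a, rfl⟩
  | cons b t ih =>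
    intro a hc hn
    have hadj : G17.Adj a b := (List.isChain_cons_cons.mp hc).1
    have hc' : (b :: t).Chain' G17.Adj := (List.isChain_cons_cons.mp hc).2
    have hn' : (b :: t).Nodup := (List.nodup_cons.mp hn).2
    have hnm : a ∉ b :: t := (List.nodup_cons.mp hn).1
    show (a :: b :: t) ∈ step (layers t.length)
    refine List.mem_flatMap.mpr ⟨b :: t, ih b hc' hn', ?_⟩
    refine List.mem_map.mpr ⟨a, List.mem_filter.mpr ⟨?_, ?_⟩, rfl⟩
    · exact hadj.symm
    · exact decide_eq_true hnm

lemma layers_thirteen : layers 13 = [] := by decide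

lemma layers_ge (n : ℕ) : layers (13 + n) = [] := by
  induction n with
  | zero => exact layers_thirteen
  | succ k ih => show step (layers (13 + k)) = []; rw [ih]; rfl

lemma path_length_le (a b : Fin 17) (q : G17.Walk a b) (hq : q.IsPath) :
    q.length ≤ 12 := by
  by_contra h
  push_neg at h
  have hsup : q.support = a :: q.support.tail := q.support_eq_cons
  have hmem : (a :: q.support.tail) ∈ layers q.support.tail.length := by
    refine mem_layers _ _ ?_ ?_
    · rw [← hsup]; exact q.isChain_adj_support
    · rw [← hsup]; exact hq.support_nodup
  have hlen : q.support.tail.length = q.length := by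
    have := q.length_support
    have h2 : q.support.tail.length + 1 = q.length + 1 := by
      rw [← this, hsup]; rfl
    omega
  rw [hlen] at hmem
  obtain ⟨m, hm⟩ : ∃ m, q.length = 13 + m := ⟨q.length - 13, by omega⟩
  rw [hm, layers_ge] at hmem
  exact List.not_mem_nil hmem

def p0 : G17.Walk 7 9 :=
  SimpleGraph.Walk.cons (show G17.Adj 7 0 by decide) (SimpleGraph.Walk.cons (show G17.Adj 0 1 by decide) (SimpleGraph.Walk.cons (show G17.Adj 1 13 by decide) (SimpleGraph.Walk.cons (show G17.Adj 13 11 by decide) (SimpleGraph.Walk.cons (show G17.Adj 11 14 by decide) (SimpleGraph.Walk.cons (show G17.Adj 14 3 by decide) (SimpleGraph.Walk.cons (show G17.Adj 3 16 by decide) (SimpleGraph.Walk.cons (show G17.Adj 16 6 by decide) (SimpleGraph.Walk.cons (show G17.Adj 6 15 by decide) (SimpleGraph.Walk.cons (show G17.Adj 15 10 by decide) (SimpleGraph.Walk.cons (show G17.Adj 10 5 by decide) (SimpleGraph.Walk.cons (show G17.Adj 5 9 by decide) (SimpleGraph.Walk.nil))))))))))))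

def p1 : G17.Walk 8 9 :=
  SimpleGraph.Walk.cons (show G17.Adj 8 4 by decide) (SimpleGraph.Walk.cons (show G17.Adj 4 3 by decide) (SimpleGraph.Walk.cons (show G17.Adj 3 16 by decide) (SimpleGraph.Walk.cons (show G17.Adj 16 6 by decide) (SimpleGraph.Walk.cons (show G17.Adj 6 13 by decide) (SimpleGraph.Walk.cons (show G17.Adj 13 11 by decide) (SimpleGraph.Walk.cons (show G17.Adj 11 14 by decide) (SimpleGraph.Walk.cons (show G17.Adj 14 2 by decide) (SimpleGraph.Walk.cons (show G17.Adj 2 15 by decide) (SimpleGraph.Walk.cons (show G17.Adj 15 10 by decide) (SimpleGraph.Walk.cons (show G17.Adj 10 5 by decide) (SimpleGraph.Walk.cons (show G17.Adj 5 9 by decide) (SimpleGraph.Walk.nil))))))))))))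

def p2 : G17.Walk 7 8 :=
  SimpleGraph.Walk.cons (show G17.Adj 7 0 by decide) (SimpleGraph.Walk.cons (show G17.Adj 0 1 by decide) (SimpleGraph.Walk.cons (show G17.Adj 1 12 by decide) (SimpleGraph.Walk.cons (show G17.Adj 12 2 by decide) (SimpleGraph.Walk.cons (show G17.Adj 2 14 by decide) (SimpleGraph.Walk.cons (show G17.Adj 14 11 by decide) (SimpleGraph.Walk.cons (show G17.Adj 11 13 by decide) (SimpleGraph.Walk.cons (show G17.Adj 13 6 by decide) (SimpleGraph.Walk.cons (show G17.Adj 6 16 by decide) (SimpleGraph.Walk.cons (show G17.Adj 16 3 by decide) (SimpleGraph.Walk.cons (show G17.Adj 3 4 by decide) (SimpleGraph.Walk.cons (show G17.Adj 4 8 by decide) (SimpleGraph.Walk.nil))))))))))))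

def p3 : G17.Walk 8 9 :=
  SimpleGraph.Walk.cons (show G17.Adj 8 4 by decide) (SimpleGraph.Walk.cons (show G17.Adj 4 3 by decide) (SimpleGraph.Walk.cons (show G17.Adj 3 14 by decide) (SimpleGraph.Walk.cons (show G17.Adj 14 11 by decide) (SimpleGraph.Walk.cons (show G17.Adj 11 13 by decide) (SimpleGraph.Walk.cons (show G17.Adj 13 1 by decide) (SimpleGraph.Walk.cons (show G17.Adj 1 12 by decide) (SimpleGraph.Walk.cons (show G17.Adj 12 2 by decide) (SimpleGraph.Walk.cons (show G17.Adj 2 15 by decide) (SimpleGraph.Walk.cons (show G17.Adj 15 10 by decide) (SimpleGraph.Walk.cons (show G17.Adj 10 5 by decide) (SimpleGraph.Walk.cons (show G17.Adj 5 9 by decide) (SimpleGraph.Walk.nil))))))))))))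

def p4 : G17.Walk 7 9 :=
  SimpleGraph.Walk.cons (show G17.Adj 7 0 by decide) (SimpleGraph.Walk.cons (show G17.Adj 0 1 by decide) (SimpleGraph.Walk.cons (show G17.Adj 1 12 by decide) (SimpleGraph.Walk.cons (show G17.Adj 12 2 by decide) (SimpleGraph.Walk.cons (show G17.Adj 2 14 by decide) (SimpleGraph.Walk.cons (show G17.Adj 14 11 by decide) (SimpleGraph.Walk.cons (show G17.Adj 11 13 by decide) (SimpleGraph.Walk.cons (show G17.Adj 13 6 by decide) (SimpleGraph.Walk.cons (show G17.Adj 6 15 by decide) (SimpleGraph.Walk.cons (show G17.Adj 15 10 by decide) (SimpleGraph.Walk.cons (show G17.Adj 10 5 by decide) (SimpleGraph.Walk.cons (show G17.Adj 5 9 by decide) (SimpleGraph.Walk.nil))))))))))))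

def p5 : G17.Walk 7 9 :=
  SimpleGraph.Walk.cons (show G17.Adj 7 0 by decide) (SimpleGraph.Walk.cons (show G17.Adj 0 1 by decide) (SimpleGraph.Walk.cons (show G17.Adj 1 12 by decide) (SimpleGraph.Walk.cons (show G17.Adj 12 2 by decide) (SimpleGraph.Walk.cons (show G17.Adj 2 14 by decide) (SimpleGraph.Walk.cons (show G17.Adj 14 3 by decide) (SimpleGraph.Walk.cons (show G17.Adj 3 16 by decide) (SimpleGraph.Walk.cons (show G17.Adj 16 6 by decide) (SimpleGraph.Walk.cons (show G17.Adj 6 15 by decide) (SimpleGraph.Walk.cons (show G17.Adj 15 10 by decide) (SimpleGraph.Walk.cons (show G17.Adj 10 5 by decide) (SimpleGraph.Walk.cons (show G17.Adj 5 9 by decide) (SimpleGraph.Walk.nil))))))))))))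

def p6 : G17.Walk 8 9 :=
  SimpleGraph.Walk.cons (show G17.Adj 8 4 by decide) (SimpleGraph.Walk.cons (show G17.Adj 4 3 by decide) (SimpleGraph.Walk.cons (show G17.Adj 3 16 by decide) (SimpleGraph.Walk.cons (show G17.Adj 16 6 by decide) (SimpleGraph.Walk.cons (show G17.Adj 6 13 by decide) (SimpleGraph.Walk.cons (show G17.Adj 13 1 by decide) (SimpleGraph.Walk.cons (show G17.Adj 1 12 by decide) (SimpleGraph.Walk.cons (show G17.Adj 12 2 by decide) (SimpleGraph.Walk.cons (show G17.Adj 2 15 by decide) (SimpleGraph.Walk.cons (show G17.Adj 15 10 by decide) (SimpleGraph.Walk.cons (show G17.Adj 10 5 by decide) (SimpleGraph.Walk.cons (show G17.Adj 5 9 by decide) (SimpleGraph.Walk.nil))))))))))))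

def reach0 : (v : Fin 17) → G17.Walk 0 v := fun v =>
  match v with
  | 0 => SimpleGraph.Walk.nil
  | 1 => SimpleGraph.Walk.cons (show G17.Adj 0 1 by decide) (SimpleGraph.Walk.nil)
  | 2 => SimpleGraph.Walk.cons (show G17.Adj 0 1 by decide) (SimpleGraph.Walk.cons (show G17.Adj 1 12 by decide) (SimpleGraph.Walk.cons (show G17.Adj 12 2 by decide) (SimpleGraph.Walk.nil)))
  | 3 => SimpleGraph.Walk.cons (show G17.Adj 0 1 by decide) (SimpleGraph.Walk.cons (show G17.Adj 1 13 by decide) (SimpleGraph.Walk.cons (show G17.Adj 13 11 by decide) (SimpleGraph.Walk.cons (show G17.Adj 11 14 by decide) (SimpleGraph.Walk.cons (show G17.Adj 14 3 by decide) (SimpleGraph.Walk.nil)))))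
  | 4 => SimpleGraph.Walk.cons (show G17.Adj 0 1 by decide) (SimpleGraph.Walk.cons (show G17.Adj 1 13 by decide) (SimpleGraph.Walk.cons (show G17.Adj 13 11 by decide) (SimpleGraph.Walk.cons (show G17.Adj 11 14 by decide) (SimpleGraph.Walk.cons (show G17.Adj 14 3 by decide) (SimpleGraph.Walk.cons (show G17.Adj 3 4 by decide) (SimpleGraph.Walk.nil))))))
  | 5 => SimpleGraph.Walk.cons (show G17.Adj 0 1 by decide) (SimpleGraph.Walk.cons (show G17.Adj 1 13 by decide) (SimpleGraph.Walk.cons (show G17.Adj 13 6 by decide) (SimpleGraph.Walk.cons (show G17.Adj 6 15 by decide) (SimpleGraph.Walk.cons (show G17.Adj 15 10 by decide) (SimpleGraph.Walk.cons (show G17.Adj 10 5 by decide) (SimpleGraph.Walk.nil))))))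
  | 6 => SimpleGraph.Walk.cons (show G17.Adj 0 1 by decide) (SimpleGraph.Walk.cons (show G17.Adj 1 13 by decide) (SimpleGraph.Walk.cons (show G17.Adj 13 6 by decide) (SimpleGraph.Walk.nil)))
  | 7 => SimpleGraph.Walk.cons (show G17.Adj 0 7 by decide) (SimpleGraph.Walk.nil)
  | 8 => SimpleGraph.Walk.cons (show G17.Adj 0 1 by decide) (SimpleGraph.Walk.cons (show G17.Adj 1 13 by decide) (SimpleGraph.Walk.cons (show G17.Adj 13 11 by decide) (SimpleGraph.Walk.cons (show G17.Adj 11 14 by decide) (SimpleGraph.Walk.cons (show G17.Adj 14 3 by decide) (SimpleGraph.Walk.cons (show G17.Adj 3 4 by decide) (SimpleGraph.Walk.cons (show G17.Adj 4 8 by decide) (SimpleGraph.Walk.nil)))))))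
  | 9 => SimpleGraph.Walk.cons (show G17.Adj 0 1 by decide) (SimpleGraph.Walk.cons (show G17.Adj 1 13 by decide) (SimpleGraph.Walk.cons (show G17.Adj 13 6 by decide) (SimpleGraph.Walk.cons (show G17.Adj 6 15 by decide) (SimpleGraph.Walk.cons (show G17.Adj 15 10 by decide) (SimpleGraph.Walk.cons (show G17.Adj 10 5 by decide) (SimpleGraph.Walk.cons (show G17.Adj 5 9 by decide) (SimpleGraph.Walk.nil)))))))
  | 10 => SimpleGraph.Walk.cons (show G17.Adj 0 1 by decide) (SimpleGraph.Walk.cons (show G17.Adj 1 13 by decide) (SimpleGraph.Walk.cons (show G17.Adj 13 6 by decide) (SimpleGraph.Walk.cons (show G17.Adj 6 15 by decide) (SimpleGraph.Walk.cons (show G17.Adj 15 10 by decide) (SimpleGraph.Walk.nil)))))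
  | 11 => SimpleGraph.Walk.cons (show G17.Adj 0 1 by decide) (SimpleGraph.Walk.cons (show G17.Adj 1 13 by decide) (SimpleGraph.Walk.cons (show G17.Adj 13 11 by decide) (SimpleGraph.Walk.nil)))
  | 12 => SimpleGraph.Walk.cons (show G17.Adj 0 1 by decide) (SimpleGraph.Walk.cons (show G17.Adj 1 12 by decide) (SimpleGraph.Walk.nil))
  | 13 => SimpleGraph.Walk.cons (show G17.Adj 0 1 by decide) (SimpleGraph.Walk.cons (show G17.Adj 1 13 by decide) (SimpleGraph.Walk.nil))
  | 14 => SimpleGraph.Walk.cons (show G17.Adj 0 1 by decide) (SimpleGraph.Walk.cons (show G17.Adj 1 13 by decide) (SimpleGraph.Walk.cons (show G17.Adj 13 11 by decide) (SimpleGraph.Walk.cons (show G17.Adj 11 14 by decide) (SimpleGraph.Walk.nil))))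
  | 15 => SimpleGraph.Walk.cons (show G17.Adj 0 1 by decide) (SimpleGraph.Walk.cons (show G17.Adj 1 13 by decide) (SimpleGraph.Walk.cons (show G17.Adj 13 6 by decide) (SimpleGraph.Walk.cons (show G17.Adj 6 15 by decide) (SimpleGraph.Walk.nil))))
  | 16 => SimpleGraph.Walk.cons (show G17.Adj 0 1 by decide) (SimpleGraph.Walk.cons (show G17.Adj 1 13 by decide) (SimpleGraph.Walk.cons (show G17.Adj 13 6 by decide) (SimpleGraph.Walk.cons (show G17.Adj 6 16 by decide) (SimpleGraph.Walk.nil))))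
  | ⟨n+17, h⟩ => absurd h (by omega)

def Plist : List (Σ u : Fin 17, Σ v : Fin 17, G17.Walk u v) :=
  [⟨7, 9, p0⟩, ⟨8, 9, p1⟩, ⟨7, 8, p2⟩, ⟨8, 9, p3⟩, ⟨7, 9, p4⟩, ⟨7, 9, p5⟩, ⟨8, 9, p6⟩]

def Pfun : Fin 7 → Σ u : Fin 17, Σ v : Fin 17, G17.Walk u v := fun i =>
  Plist.getD i.val ⟨7, 9, p0⟩

lemma G17_connected : G17.Connected := by
  have h : ∀ v : Fin 17, G17.Reachable 0 v := fun v => ⟨reach0 v⟩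
  exact ⟨fun u v => (h u).symm.trans (h v)⟩

lemma no_common : ¬ ∃ x : Fin 17, ∀ i : Fin 7, x ∈ (Pfun i).2.2.support := by decide

lemma Pfun_injective : Function.Injective Pfun := by decide

lemma Pfun_isPath : ∀ i : Fin 7, (Pfun i).2.2.IsPath := by
  have h : ∀ i : Fin 7, (Pfun i).2.2.support.Nodup := by decide
  exact fun i => (SimpleGraph.Walk.isPath_def _).mpr (h i)

lemma Pfun_length : ∀ i : Fin 7, (Pfun i).2.2.length = 12 := by decide

theorem skupien_seven_paths :
    ∃ (V : Type) (instV : Fintype V) (G : SimpleGraph V),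
      G.Connected ∧ @Fintype.card V instV = 17 ∧
      ∃ P : Fin 7 → Σ u : V, Σ v : V, G.Walk u v,
        Function.Injective P ∧ (∀ i, IsLongestPath G (P i).2.2) ∧
        (¬ ∃ x : V, ∀ i, x ∈ (P i).2.2.support) ∧
        1 ≤ pdf G P := by
  refine ⟨Fin 17, inferInstance, G17, G17_connected, by simp, Pfun, Pfun_injective, ?_, no_common, ?_⟩
  · intro i
    refine ⟨Pfun_isPath i, ?_⟩
    intro a b q hq
    rw [Pfun_length i]
    exact path_length_le a b q hq
  · -- 1 ≤ pdf
    refine Nat.one_le_iff_ne_zero.mpr ?_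
    intro hz
    unfold pdf at hz
    rcases Nat.sInf_eq_zero.mp hz with h | h
    · obtain ⟨x, hx⟩ := h
      have hall : ∀ i : Fin 7, distToWalk G17 x (Pfun i).2.2 = 0 :=
        fun i => (Finset.sum_eq_zero_iff.mp hx.symm) i (Finset.mem_univ i)
      apply no_common
      refine ⟨x, fun i => ?_⟩
      have hzero := hall i
      unfold distToWalk at hzero
      have hDne : {d : ℕ | ∃ y ∈ (Pfun i).2.2.support, G17.dist x y = d}.Nonempty :=
        ⟨G17.dist x (Pfun i).1, ⟨(Pfun i).1, (Pfun i).2.2.start_mem_support, rfl⟩⟩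
      rcases Nat.sInf_eq_zero.mp hzero with h' | h'
      · obtain ⟨y, hy, hdy⟩ := h'
        have hxy : x = y := G17_connected.dist_eq_zero_iff.mp hdy
        rwa [hxy]
      · rw [h'] at hDne
        exact absurd hDne Set.not_nonempty_empty
    · have hne : ({s : ℕ | ∃ x : Fin 17, s = ∑ i, distToWalk G17 x (Pfun i).2.2}).Nonempty :=
        ⟨_, ⟨0, rfl⟩⟩
      rw [h] at hne
      exact absurd hne Set.not_nonempty_empty
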